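/- Cycle lemma for a single frequency: let n ≥ 1, let σ ∈ S_n be a permutation with m(σ) cycles (orbits on {1, …, n}, counting fixed points), and let f : ℝⁿ → ℝ be a bounded measurable function with compact support. Then lim_{ω → ∞} ∫_{ℝⁿ} ( ∏_{i=1}^n cos(ω(x_{σ(i)} − x_i)) ) f(x₁, …, x_n) dx₁ ⋯ dx_n = (1/2)^{n − m(σ)} ∫_{ℝⁿ} f(x₁, …, x_n) dx₁ ⋯ dx_n, the limit being over real ω → ∞. -/

import Mathlib

open Filter MeasureTheory

/-- The setoid on `Fin n` whose classes are the cycles (orbits) of a permutation `σ`,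
counting fixed points as singleton orbits. -/
def sameCycleSetoid {n : ℕ} (σ : Equiv.Perm (Fin n)) : Setoid (Fin n) :=
  ⟨σ.SameCycle, ⟨fun x => Equiv.Perm.SameCycle.refl σ x,
    fun h => h.symm, fun h h' => h.trans h'⟩⟩

/-- `cycleCount σ` is the number of cycles `m(σ)` of the permutation `σ`. -/
noncomputable def cycleCount {n : ℕ} (σ : Equiv.Perm (Fin n)) : ℕ :=
  Nat.card (Quotient (sameCycleSetoid σ))

namespace CycleLemmaAux

open Complex Finset Real
open scoped FourierTransform

variable {n : ℕ} (σ : Equiv.Perm (Fin n))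

def sgn (t : Finset (Fin n)) (i : Fin n) : ℝ := if i ∈ t then 1 else -1

def coeff (t : Finset (Fin n)) (j : Fin n) : ℝ := sgn t (σ⁻¹ j) - sgn t j

def LL (t : Finset (Fin n)) (x : Fin n → ℝ) : ℝ := ∑ j, coeff σ t j * x j

theorem LL_continuous (t : Finset (Fin n)) : Continuous (LL σ t) := by
  unfold LL
  exact continuous_finset_sum _ fun j _ => (continuous_const.mul (continuous_apply j))

theorem alg (t : Finset (Fin n)) (x : Fin n → ℝ) :
    (∑ i ∈ t, (x (σ i) - x i)) - ∑ i ∈ univ \ t, (x (σ i) - x i) = LL σ t x := by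
  have h1 : ∑ i, sgn t i * (x (σ i) - x i)
      = (∑ i ∈ t, (x (σ i) - x i)) - ∑ i ∈ univ \ t, (x (σ i) - x i) := by
    rw [← Finset.sum_sdiff (t.subset_univ)]
    have ha : ∑ i ∈ t, sgn t i * (x (σ i) - x i) = ∑ i ∈ t, (x (σ i) - x i) :=
      Finset.sum_congr rfl (fun i hi => by simp [sgn, hi])
    have hb : ∑ i ∈ univ \ t, sgn t i * (x (σ i) - x i)
        = ∑ i ∈ univ \ t, -(x (σ i) - x i) :=
      Finset.sum_congr rfl (fun i hi => by simp [sgn, (Finset.mem_sdiff.1 hi).2])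
    rw [ha, hb, Finset.sum_neg_distrib]
    ring
  have h2 : ∑ i, sgn t i * x (σ i) = ∑ j, sgn t (σ⁻¹ j) * x j := by
    rw [← Equiv.sum_comp σ (fun j => sgn t (σ⁻¹ j) * x j)]
    simp
  have h3 : ∑ i, sgn t i * (x (σ i) - x i)
      = ∑ j, sgn t (σ⁻¹ j) * x j - ∑ j, sgn t j * x j := by
    simp_rw [mul_sub, Finset.sum_sub_distrib, h2]
  rw [← h1, h3, LL]
  simp_rw [coeff, sub_mul, Finset.sum_sub_distrib]

theorem expand (ω : ℝ) (x : Fin n → ℝ) :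
    ((∏ i, Real.cos (ω * (x (σ i) - x i)) : ℝ) : ℂ) =
      ∑ t ∈ (univ : Finset (Fin n)).powerset,
        (1 / 2 : ℂ) ^ n * Complex.exp (↑(ω * LL σ t x) * I) := by
  have hcos : ∀ z : ℂ, Complex.cos z = (Complex.exp (z * I) + Complex.exp (-z * I)) / 2 :=
    fun z => rfl
  rw [Complex.ofReal_prod]
  simp_rw [Complex.ofReal_cos, hcos, div_eq_mul_inv, Finset.prod_mul_distrib,
    Finset.prod_const, Finset.prod_add, Finset.sum_mul]
  rw [Finset.card_univ, Fintype.card_fin]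
  refine Finset.sum_congr rfl fun t ht => ?_
  rw [← Complex.exp_sum, ← Complex.exp_sum, ← Complex.exp_add, mul_comm]
  congr 1
  · norm_num
  congr 1
  push_cast
  simp_rw [neg_mul, Finset.sum_neg_distrib, ← sub_eq_add_neg, ← Finset.sum_mul]
  rw [← sub_mul]
  congr 1
  rw [← alg σ t x]
  push_cast
  rw [mul_sub, Finset.mul_sum, Finset.mul_sum]

theorem pow_mem_invt {t : Finset (Fin n)} (ht : ∀ i, σ i ∈ t ↔ i ∈ t) (k : ℕ) :
    ∀ a, a ∈ t → (σ ^ k) a ∈ t := by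
  induction k with
  | zero => simpa using fun a ha => ha
  | succ k ih =>
    intro a ha
    have : (σ ^ (k + 1)) a = (σ ^ k) (σ a) := by
      rw [pow_succ, Equiv.Perm.mul_apply]
    rw [this]
    exact ih _ ((ht a).mpr ha)

theorem mem_of_sameCycle {t : Finset (Fin n)} (ht : ∀ i, σ i ∈ t ↔ i ∈ t)
    {a b : Fin n} (h : σ.SameCycle a b) (ha : a ∈ t) : b ∈ t := by
  obtain ⟨k, -, rfl⟩ := h.exists_pow_eq'
  exact pow_mem_invt σ ht k a ha

theorem count_invariant :
    ((univ : Finset (Finset (Fin n))).filter (fun t => ∀ i, σ i ∈ t ↔ i ∈ t)).card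
      = 2 ^ cycleCount σ := by
  classical
  letI : Fintype (Quotient (sameCycleSetoid σ)) := Fintype.ofFinite _
  rw [cycleCount, Nat.card_eq_fintype_card, ← Fintype.card_finset, ← Finset.card_univ]
  refine Finset.card_bij' (fun t _ => t.image (Quotient.mk (sameCycleSetoid σ)))
    (fun q _ => univ.filter (fun i => Quotient.mk (sameCycleSetoid σ) i ∈ q))
    (fun t ht => Finset.mem_univ _) ?_ ?_ ?_
  · intro q _
    simp only [Finset.mem_filter, Finset.mem_univ, true_and]
    intro i
    have hmk : Quotient.mk (sameCycleSetoid σ) (σ i) = Quotient.mk (sameCycleSetoid σ) i :=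
      Quotient.sound (Equiv.Perm.sameCycle_apply_left.mpr (Equiv.Perm.SameCycle.refl σ i))
    constructor
    · intro h; rwa [hmk] at h
    · intro h; rwa [hmk]
  · intro t ht
    simp only [Finset.mem_filter, Finset.mem_univ, true_and] at ht
    ext i
    simp only [Finset.mem_filter, Finset.mem_univ, true_and, Finset.mem_image]
    constructor
    · rintro ⟨a, ha, hq⟩
      exact mem_of_sameCycle σ ht (Quotient.exact hq) ha
    · intro hi; exact ⟨i, hi, rfl⟩
  · intro q _
    ext c
    simp only [Finset.mem_image, Finset.mem_filter, Finset.mem_univ, true_and]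
    constructor
    · rintro ⟨i, hi, rfl⟩; exact hi
    · intro hc
      obtain ⟨i, rfl⟩ := Quotient.exists_rep c
      exact ⟨i, hc, rfl⟩

theorem cycleCount_le : cycleCount σ ≤ n := by
  have h := Nat.card_le_card_of_surjective (Quotient.mk (sameCycleSetoid σ))
    (Quotient.exists_rep)
  simpa [cycleCount] using h

theorem f_integrable (f : (Fin n → ℝ) → ℝ) (hmeas : Measurable f)
    (hbd : ∃ C : ℝ, ∀ x, |f x| ≤ C) (hsupp : HasCompactSupport f) :
    Integrable f (volume : Measure (Fin n → ℝ)) := by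
  obtain ⟨C, hC⟩ := hbd
  refine Integrable.mono' (g := (tsupport f).indicator fun _ => max C 0) ?_
    hmeas.aestronglyMeasurable (Filter.Eventually.of_forall fun x => ?_)
  · exact (integrableOn_const hsupp.measure_lt_top.ne).integrable_indicator
      (isClosed_tsupport f).measurableSet
  · by_cases hx : x ∈ tsupport f
    · rw [Set.indicator_of_mem hx]
      exact (hC x).trans (le_max_left _ _)
    · rw [Set.indicator_of_notMem hx, image_eq_zero_of_notMem_tsupport hx]
      simp

theorem term_integrable (f : (Fin n → ℝ) → ℝ) (hf : Integrable f (volume : Measure (Fin n → ℝ)))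
    (t : Finset (Fin n)) (ω : ℝ) :
    Integrable (fun x : Fin n → ℝ => Complex.exp (↑(ω * LL σ t x) * I) * (f x : ℂ)) volume := by
  refine Integrable.bdd_mul (c := 1) hf.ofReal ?_ (Filter.Eventually.of_forall fun x => ?_)
  · exact (Complex.continuous_exp.comp
      (((continuous_ofReal.comp ((continuous_const.mul (LL_continuous σ t))))).mul
        continuous_const)).aestronglyMeasurable
  · rw [Complex.norm_exp_ofReal_mul_I]

theorem term_tendsto (f : (Fin n → ℝ) → ℝ) (hf : Integrable f (volume : Measure (Fin n → ℝ)))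
    (t : Finset (Fin n)) :
    Tendsto (fun ω : ℝ => ∫ x : Fin n → ℝ, Complex.exp (↑(ω * LL σ t x) * I) * (f x : ℂ))
      atTop (nhds (if ∀ i, σ i ∈ t ↔ i ∈ t then ↑(∫ x : Fin n → ℝ, f x) else 0)) := by
  by_cases hP : ∀ i, σ i ∈ t ↔ i ∈ t
  · rw [if_pos hP]
    have hc : ∀ j, coeff σ t j = 0 := by
      intro j
      have := hP (σ⁻¹ j)
      rw [show σ (σ⁻¹ j) = j from σ.apply_symm_apply j] at this
      unfold coeff sgn
      by_cases hj : j ∈ t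
      · rw [if_pos (this.mp hj), if_pos hj]; ring
      · rw [if_neg (fun h => hj (this.mpr h)), if_neg hj]; ring
    have hL : ∀ x, LL σ t x = 0 := fun x => by simp [LL, hc]
    simp only [hL, mul_zero, Complex.ofReal_zero, zero_mul, Complex.exp_zero, one_mul]
    have hIR : (∫ x : Fin n → ℝ, ((f x : ℂ))) = ((∫ x : Fin n → ℝ, f x : ℝ) : ℂ) :=
      integral_ofReal
    rw [hIR]
    exact tendsto_const_nhds
  · rw [if_neg hP]
    obtain ⟨i, hi⟩ := not_forall.mp hP
    have hcne : coeff σ t (σ i) ≠ 0 := by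
      unfold coeff sgn
      rw [show σ⁻¹ (σ i) = i from σ.symm_apply_apply i]
      by_cases h1 : i ∈ t <;> by_cases h2 : σ i ∈ t <;>
        simp [h1, h2] at hi ⊢ <;> norm_num
    set Lc : (Fin n → ℝ) →L[ℝ] ℝ := ∑ j, coeff σ t j • ContinuousLinearMap.proj j with hLc
    have hLcapp : ∀ x, Lc x = LL σ t x := by
      intro x
      rw [hLc, ContinuousLinearMap.sum_apply]
      simp only [ContinuousLinearMap.smul_apply, ContinuousLinearMap.proj_apply, smul_eq_mul]
      rfl
    have hLcne : Lc ≠ 0 := by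
      intro h
      apply hcne
      have := congrArg (fun M : (Fin n → ℝ) →L[ℝ] ℝ => M (Pi.single (σ i) 1)) h
      simp only [ContinuousLinearMap.zero_apply] at this
      rw [hLcapp] at this
      simpa [LL, Pi.single_apply, mul_ite, Finset.sum_ite_eq'] using this
    have hRL := tendsto_integral_exp_smul_cocompact (fun x : Fin n → ℝ => (f x : ℂ))
      (volume : Measure (Fin n → ℝ))
    have hmap : Tendsto (fun ω : ℝ => (-(ω / (2 * π))) • Lc) atTop
        (cocompact ((Fin n → ℝ) →L[ℝ] ℝ)) := by
      rw [← Metric.cobounded_eq_cocompact, ← tendsto_norm_atTop_iff_cobounded]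
      have hn : ∀ ω : ℝ, ‖(-(ω / (2 * π))) • Lc‖ = |ω / (2 * π)| * ‖Lc‖ := by
        intro ω
        rw [norm_smul (-(ω / (2 * π))) Lc, Real.norm_eq_abs, abs_neg]
      simp only [hn]
      apply Tendsto.atTop_mul_const (norm_pos_iff.mpr hLcne)
      exact tendsto_abs_atTop_atTop.comp (tendsto_id.atTop_div_const Real.two_pi_pos)
    have hcomp := hRL.comp hmap
    have heq : (fun ω : ℝ => ∫ v : Fin n → ℝ, 𝐞 (-(((-(ω / (2 * π))) • Lc) v)) • (f v : ℂ))
        = fun ω : ℝ => ∫ x : Fin n → ℝ, Complex.exp (↑(ω * LL σ t x) * I) * (f x : ℂ) := by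
      funext ω
      congr 1
      funext v
      rw [Circle.smul_def, Real.fourierChar_apply]
      congr 2
      have hr : 2 * π * -((((-(ω / (2 * π))) • Lc)) v) = ω * LL σ t v := by
        simp only [ContinuousLinearMap.smul_apply, smul_eq_mul, neg_mul, neg_neg]
        rw [hLcapp]
        field_simp
      rw [hr]
    rw [Function.comp_def, heq] at hcomp
    exact hcomp

end CycleLemmaAux

open CycleLemmaAux Complex Finset

/-- Cycle lemma for a single frequency: for a permutation `σ` with `m(σ)` cycles and `f`
bounded, measurable, compactly supported,
`∫ (∏ i cos(ω(x_{σ(i)} − x_i))) f(x) dx → (1/2)^(n − m(σ)) ∫ f(x) dx` as `ω → ∞`. -/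
theorem cycle_lemma_single_frequency (n : ℕ) (hn : 1 ≤ n) (σ : Equiv.Perm (Fin n))
    (f : (Fin n → ℝ) → ℝ) (hmeas : Measurable f) (hbd : ∃ C : ℝ, ∀ x, |f x| ≤ C)
    (hsupp : HasCompactSupport f) :
    Tendsto (fun ω : ℝ =>
        ∫ x : Fin n → ℝ, (∏ i, Real.cos (ω * (x (σ i) - x i))) * f x)
      atTop (nhds ((1 / 2 : ℝ) ^ (n - cycleCount σ) * ∫ x : Fin n → ℝ, f x)) := by
  classical
  have hfint : Integrable f (volume : Measure (Fin n → ℝ)) := f_integrable f hmeas hbd hsupp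
  have hmn : cycleCount σ ≤ n := cycleCount_le σ
  -- the complex-valued version of the integral
  have hexp : ∀ ω : ℝ,
      ((∫ x : Fin n → ℝ, (∏ i, Real.cos (ω * (x (σ i) - x i))) * f x : ℝ) : ℂ)
      = ∑ t ∈ (univ : Finset (Fin n)).powerset,
          (1 / 2 : ℂ) ^ n * ∫ x : Fin n → ℝ, Complex.exp (↑(ω * LL σ t x) * I) * (f x : ℂ) := by
    intro ω
    have h1 : ((∫ x : Fin n → ℝ, (∏ i, Real.cos (ω * (x (σ i) - x i))) * f x : ℝ) : ℂ)
        = ∫ x : Fin n → ℝ,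
            (((∏ i, Real.cos (ω * (x (σ i) - x i))) * f x : ℝ) : ℂ) := integral_ofReal.symm
    rw [h1]
    have h3 : (fun x : Fin n → ℝ => (((∏ i, Real.cos (ω * (x (σ i) - x i))) * f x : ℝ) : ℂ))
        = fun x : Fin n → ℝ => ∑ t ∈ (univ : Finset (Fin n)).powerset,
            (1 / 2 : ℂ) ^ n * (Complex.exp (↑(ω * LL σ t x) * I) * (f x : ℂ)) := by
      funext x
      rw [Complex.ofReal_mul, expand σ ω x, Finset.sum_mul]
      simp_rw [mul_assoc]
    rw [h3, integral_finset_sum _ (fun t _ => ((term_integrable σ f hfint t ω).const_mul _))]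
    refine Finset.sum_congr rfl fun t ht => ?_
    rw [integral_const_mul]
  -- limit of the complex-valued sum
  have hlim : Tendsto (fun ω : ℝ => ∑ t ∈ (univ : Finset (Fin n)).powerset,
        (1 / 2 : ℂ) ^ n * ∫ x : Fin n → ℝ, Complex.exp (↑(ω * LL σ t x) * I) * (f x : ℂ))
      atTop (nhds (∑ t ∈ (univ : Finset (Fin n)).powerset,
        (1 / 2 : ℂ) ^ n *
          (if ∀ i, σ i ∈ t ↔ i ∈ t then ((∫ x : Fin n → ℝ, f x : ℝ) : ℂ) else 0))) :=
    tendsto_finset_sum _ fun t _ => (term_tendsto σ f hfint t).const_mul _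
  -- evaluate the limit sum
  have hsum : (∑ t ∈ (univ : Finset (Fin n)).powerset,
        (1 / 2 : ℂ) ^ n *
          (if ∀ i, σ i ∈ t ↔ i ∈ t then ((∫ x : Fin n → ℝ, f x : ℝ) : ℂ) else 0))
      = (((1 / 2 : ℝ) ^ (n - cycleCount σ) * ∫ x : Fin n → ℝ, f x : ℝ) : ℂ) := by
    simp_rw [mul_ite, mul_zero, ← Finset.sum_filter, Finset.sum_const, Finset.powerset_univ]
    rw [count_invariant σ, nsmul_eq_mul]
    push_cast
    rw [← mul_assoc]
    congr 1
    rw [pow_sub₀ ((1 : ℂ) / 2) (by norm_num) hmn]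
    rw [one_div, inv_pow, inv_pow, inv_inv]
    ring
  rw [hsum] at hlim
  have hfin := (Complex.continuous_re.tendsto _).comp
    (hlim.congr (fun ω => (hexp ω).symm))
  have h5 : (Complex.re ∘ fun ω : ℝ =>
        ((∫ x : Fin n → ℝ, (∏ i, Real.cos (ω * (x (σ i) - x i))) * f x : ℝ) : ℂ))
      = fun ω : ℝ => ∫ x : Fin n → ℝ, (∏ i, Real.cos (ω * (x (σ i) - x i))) * f x := by
    funext ω
    simp
  rw [h5] at hfin
  simpa only [Complex.ofReal_re] using hfin
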